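/- Robustness guarantee under infinity measurement error. Let (X, dist) be a metric space (the state space), A a nonempty finite set, and Q* : X → A → ℝ. Let φ, π : X → A → ℝ be such that for every s, φ(s,·) and π(s,·) are probability vectors on A and π(s,a) > 0 for all a. Let μ : X → ℝ with μ(s) > 0 for all s, and let δ > 0, ε > 0. Assume: (H1) μ(s) · KL(φ(s,·) ‖ π(s,·)) ≤ δ for every s; (H2) for every s, Argmax(φ, s) = Argmax(Q*, s). Define S_δ := {s : ∃ a ≠ a' in A with |φ(s,a) − φ(s,a')| ≤ 2√(2δ/μ(s))}. Then: (i) {s : some maximizer a of π(s,·) satisfies Q*(s,a) < max_{a'} Q*(s,a')} ⊆ S_δ; (ii) {s : ∃ s_ν with dist(s_ν, s) ≤ ε and some maximizer a of π(s_ν,·) with Q*(s,a) < max_{a'} Q*(s,a')} ⊆ {s : ∃ x ∈ S_δ with dist(s, x) ≤ ε} ∪ {s : ∃ s_ν with dist(s_ν, s) ≤ ε and Argmax(Q*, s_ν) ⊄ Argmax(Q*, s)}. -/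

import Mathlib

/-- The argmax set of a function `X → A → ℝ` at a state `x`. -/
def Amax {X A : Type*} (Q : X → A → ℝ) (x : X) : Set A :=
  {a | ∀ a', Q x a' ≤ Q x a}

/-- Kullback–Leibler divergence of probability vectors on a finite set
(with the convention `0 · log 0 = 0`, automatic since `Real.log 0 = 0`). -/
noncomputable def KLfin {A : Type*} [Fintype A] (p q : A → ℝ) : ℝ :=
  ∑ a, p a * Real.log (p a / q a)

/- ### Auxiliary lemmas towards Pinsker's inequality -/

lemma Paux_hasDeriv {x : ℝ} (hx : 0 < x) :
    HasDerivAt (fun t : ℝ => (t + 1) * Real.log t - 2 * t + 2)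
      (Real.log x + (x + 1) * x⁻¹ - 2) x := by
  have h1 : HasDerivAt (fun t : ℝ => (t + 1) * Real.log t)
      (1 * Real.log x + (x + 1) * x⁻¹) x :=
    (((hasDerivAt_id x).add_const 1).mul (Real.hasDerivAt_log hx.ne'))
  have h2 := (h1.sub ((hasDerivAt_id x).const_mul 2)).add_const 2
  exact h2.congr_deriv (by ring)

lemma Paux_deriv_nonneg {x : ℝ} (hx : 0 < x) :
    0 ≤ Real.log x + (x + 1) * x⁻¹ - 2 := by
  have h := Real.log_le_sub_one_of_pos (show (0:ℝ) < x⁻¹ by positivity)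
  rw [Real.log_inv] at h
  have hx' : (x + 1) * x⁻¹ = 1 + x⁻¹ := by field_simp
  linarith

lemma Paux_mono : MonotoneOn (fun t : ℝ => (t + 1) * Real.log t - 2 * t + 2) (Set.Ioi 0) := by
  apply monotoneOn_of_deriv_nonneg (convex_Ioi 0)
  · exact fun x hx => ((Paux_hasDeriv hx).continuousAt).continuousWithinAt
  · intro x hx
    rw [interior_Ioi] at hx
    exact ((Paux_hasDeriv hx).differentiableAt).differentiableWithinAt
  · intro x hx
    rw [interior_Ioi] at hx
    rw [(Paux_hasDeriv hx).deriv]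
    exact Paux_deriv_nonneg hx

lemma Paux_sign {x : ℝ} (hx : 0 < x) :
    (x ≤ 1 → (x + 1) * Real.log x - 2 * x + 2 ≤ 0) ∧
    (1 ≤ x → 0 ≤ (x + 1) * Real.log x - 2 * x + 2) := by
  have h0 : (fun t : ℝ => (t + 1) * Real.log t - 2 * t + 2) 1 = 0 := by simp
  constructor
  · intro h
    have := Paux_mono hx (by norm_num) h
    simpa [h0] using this
  · intro h
    have := Paux_mono (by norm_num : (1:ℝ) ∈ Set.Ioi 0) hx h
    simpa [h0] using this

noncomputable def Gaux (t : ℝ) : ℝ := 2 * (t + 2) * (t * Real.log t - t + 1) - 3 * (t - 1) ^ 2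

lemma Gaux_hasDeriv {x : ℝ} (hx : 0 < x) :
    HasDerivAt Gaux (4 * ((x + 1) * Real.log x - 2 * x + 2)) x := by
  have hxlog : HasDerivAt (fun t : ℝ => t * Real.log t) (1 * Real.log x + x * x⁻¹) x :=
    (hasDerivAt_id x).mul (Real.hasDerivAt_log hx.ne')
  have h1 : HasDerivAt (fun t : ℝ => t * Real.log t - t + 1)
      ((1 * Real.log x + x * x⁻¹) - 1) x := (hxlog.sub (hasDerivAt_id x)).add_const 1
  have h2 : HasDerivAt (fun t : ℝ => 2 * (t + 2)) 2 x := by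
    simpa using (((hasDerivAt_id x).add_const 2).const_mul 2)
  have h3 := (h2.mul h1).sub (((((hasDerivAt_id x).sub_const 1).pow 2)).const_mul 3)
  have hxx : x * x⁻¹ = 1 := mul_inv_cancel₀ hx.ne'
  refine h3.congr_deriv ?_
  simp only [id_eq, Nat.cast_ofNat]
  rw [hxx]; norm_num; ring

lemma Gaux_nonneg {x : ℝ} (hx : 0 < x) : 0 ≤ Gaux x := by
  have h1 : Gaux 1 = 0 := by simp [Gaux]
  rcases le_total x 1 with h | h
  · have hanti : AntitoneOn Gaux (Set.Ioc 0 1) := by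
      apply antitoneOn_of_deriv_nonpos (convex_Ioc 0 1)
      · exact fun y hy => ((Gaux_hasDeriv hy.1).continuousAt).continuousWithinAt
      · intro y hy
        rw [interior_Ioc] at hy
        exact ((Gaux_hasDeriv hy.1).differentiableAt).differentiableWithinAt
      · intro y hy
        rw [interior_Ioc] at hy
        rw [(Gaux_hasDeriv hy.1).deriv]
        have := (Paux_sign hy.1).1 hy.2.le
        linarith
    have := hanti (Set.mem_Ioc.2 ⟨hx, h⟩) (Set.mem_Ioc.2 ⟨one_pos, le_refl 1⟩) h
    rwa [h1] at this
  · have hmono : MonotoneOn Gaux (Set.Ici 1) := by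
      apply monotoneOn_of_deriv_nonneg (convex_Ici 1)
      · exact fun y hy =>
          ((Gaux_hasDeriv (lt_of_lt_of_le one_pos hy)).continuousAt).continuousWithinAt
      · intro y hy
        rw [interior_Ici] at hy
        exact ((Gaux_hasDeriv (lt_trans one_pos hy)).differentiableAt).differentiableWithinAt
      · intro y hy
        rw [interior_Ici] at hy
        rw [(Gaux_hasDeriv (lt_trans one_pos hy)).deriv]
        have := (Paux_sign (lt_trans one_pos hy)).2 hy.le
        linarith
    have := hmono (Set.mem_Ici.2 (le_refl 1)) (Set.mem_Ici.2 h) h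
    rwa [h1] at this

/-- Pointwise refined log inequality: for `p ≥ 0`, `q > 0`,
`p - q + 3(p-q)²/(2(p+2q)) ≤ p log(p/q)`. -/
lemma pointwise_log_ineq {p q : ℝ} (hp : 0 ≤ p) (hq : 0 < q) :
    p - q + 3 * (p - q) ^ 2 / (2 * (p + 2 * q)) ≤ p * Real.log (p / q) := by
  rcases eq_or_lt_of_le hp with h | hp
  · subst h
    have h4 : 3 * ((0:ℝ) - q) ^ 2 / (2 * (0 + 2 * q)) = 3 * q / 4 := by
      field_simp; ring
    rw [h4, zero_mul]
    linarith
  · have ht : 0 < p / q := div_pos hp hq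
    have key := Gaux_nonneg ht
    unfold Gaux at key
    set t := p / q with htdef
    have hpt : p = q * t := by rw [htdef]; field_simp
    have hpos : 0 < 2 * (p + 2 * q) := by positivity
    have h2 : 3 * (p - q) ^ 2 / (2 * (p + 2 * q)) ≤ p * Real.log t - (p - q) := by
      rw [div_le_iff₀ hpos, hpt]
      nlinarith [mul_nonneg (sq_nonneg q) key]
    linarith

/-- Pinsker's inequality for probability vectors on a finite type. -/
lemma pinsker_fin {A : Type*} [Fintype A] (p q : A → ℝ)
    (hp : ∀ a, 0 ≤ p a) (hp1 : ∑ a, p a = 1)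
    (hq : ∀ a, 0 < q a) (hq1 : ∑ a, q a = 1) :
    ∑ a, |p a - q a| ≤ Real.sqrt (2 * KLfin p q) := by
  set c : A → ℝ := fun a => 3 * (p a - q a) ^ 2 / (2 * (p a + 2 * q a)) with hc
  have hcnn : ∀ a, 0 ≤ c a := fun a => by
    have : 0 < p a + 2 * q a := by have := hp a; have := hq a; linarith
    positivity
  have hckl : ∑ a, c a ≤ KLfin p q := by
    have h1 : ∀ a, p a - q a + c a ≤ p a * Real.log (p a / q a) :=
      fun a => pointwise_log_ineq (hp a) (hq a)
    have h2 : ∑ a, (p a - q a + c a) ≤ ∑ a, p a * Real.log (p a / q a) :=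
      Finset.sum_le_sum fun a _ => h1 a
    rw [Finset.sum_add_distrib, Finset.sum_sub_distrib, hp1, hq1] at h2
    simpa [KLfin] using h2
  set f : A → ℝ := fun a => |p a - q a| * Real.sqrt (3 / (2 * (p a + 2 * q a)))
  set g : A → ℝ := fun a => Real.sqrt (2 * (p a + 2 * q a) / 3)
  have hs : ∀ a, 0 < p a + 2 * q a := fun a => by have := hp a; have := hq a; linarith
  have hfg : ∀ a, f a * g a = |p a - q a| := by
    intro a
    have h3 : (0:ℝ) ≤ 3 / (2 * (p a + 2 * q a)) := by have := hs a; positivity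
    rw [mul_assoc, ← Real.sqrt_mul h3]
    have hne : p a + 2 * q a ≠ 0 := (hs a).ne'
    have : 3 / (2 * (p a + 2 * q a)) * (2 * (p a + 2 * q a) / 3) = 1 := by
      field_simp
    rw [this, Real.sqrt_one, mul_one]
  have hf2 : ∀ a, f a ^ 2 = c a := by
    intro a
    have h3 : (0:ℝ) ≤ 3 / (2 * (p a + 2 * q a)) := by have := hs a; positivity
    rw [mul_pow, sq_abs, Real.sq_sqrt h3, hc]
    ring
  have hg2 : ∑ a, g a ^ 2 = 2 := by
    have : ∀ a, g a ^ 2 = 2 * (p a + 2 * q a) / 3 := fun a => by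
      have := (hs a).le
      rw [Real.sq_sqrt (by positivity)]
    rw [Finset.sum_congr rfl fun a _ => this a]
    rw [← Finset.sum_div]
    have : ∑ a, 2 * (p a + 2 * q a) = 6 := by
      rw [← Finset.mul_sum, Finset.sum_add_distrib, hp1, ← Finset.mul_sum, hq1]
      norm_num
    rw [this]; norm_num
  have cs := Finset.sum_mul_sq_le_sq_mul_sq Finset.univ f g
  rw [Finset.sum_congr rfl fun a _ => hfg a,
      Finset.sum_congr rfl fun a _ => hf2 a, hg2] at cs
  have hsum_nn : 0 ≤ ∑ a, |p a - q a| := Finset.sum_nonneg fun a _ => abs_nonneg _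
  have h4 : (∑ a, |p a - q a|) ^ 2 ≤ 2 * KLfin p q := by nlinarith
  calc ∑ a, |p a - q a| = Real.sqrt ((∑ a, |p a - q a|) ^ 2) := (Real.sqrt_sq hsum_nn).symm
    _ ≤ Real.sqrt (2 * KLfin p q) := Real.sqrt_le_sqrt h4

/-- Key lemma: if all distinct coordinates of `p` are separated by more than `2t`
and `√(2 KL(p‖q)) ≤ t`, then any maximizer of `q` is a maximizer of `p`. -/
lemma key_argmax {A : Type*} [Fintype A] [Nonempty A] (p q : A → ℝ)
    (hp : ∀ a, 0 ≤ p a) (hp1 : ∑ a, p a = 1)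
    (hq : ∀ a, 0 < q a) (hq1 : ∑ a, q a = 1)
    (t : ℝ) (hKL : Real.sqrt (2 * KLfin p q) ≤ t)
    (hgap : ∀ a a', a ≠ a' → 2 * t < |p a - p a'|)
    (a : A) (ha : ∀ a', q a' ≤ q a) : ∀ a', p a' ≤ p a := by
  obtain ⟨b, hb⟩ := Finite.exists_max p
  by_cases hab : a = b
  · subst hab; exact hb
  · exfalso
    have hsum := (pinsker_fin p q hp hp1 hq hq1).trans hKL
    have hbound : ∀ x, |p x - q x| ≤ t := fun x =>
      le_trans (Finset.single_le_sum (fun i _ => abs_nonneg (p i - q i))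
        (Finset.mem_univ x)) hsum
    have hgap' := hgap b a (fun h => hab h.symm)
    rw [abs_of_nonneg (by linarith [hb a])] at hgap'
    have h1 := abs_le.mp (hbound a)
    have h2 := abs_le.mp (hbound b)
    have h3 := ha b
    linarith [h1.1, h1.2, h2.1, h2.2]

/-- Robustness guarantee under infinity measurement error: if
`μ(s) · KL(φ(s,·) ‖ π(s,·)) ≤ δ` everywhere and `φ` is greedy-consistent with `Q*`, then
(i) the naturally suboptimal state set of `π` is contained in `S_δ`, and (ii) the
`ε`-adversarial state set of `π` is contained in the `ε`-dilation of `S_δ` together with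
states whose `ε`-neighborhood leaves the intrinsic (argmax-consistent) region. -/
theorem stmt17 {X : Type*} [MetricSpace X] {A : Type*} [Fintype A] [Nonempty A]
    (Qstar φ pol : X → A → ℝ)
    (hφprob : ∀ s, (∀ a, 0 ≤ φ s a) ∧ ∑ a, φ s a = 1)
    (hpolprob : ∀ s, (∀ a, 0 < pol s a) ∧ ∑ a, pol s a = 1)
    (μ : X → ℝ) (hμ : ∀ s, 0 < μ s)
    (δ ε : ℝ) (hδ : 0 < δ) (hε : 0 < ε)
    (H1 : ∀ s, μ s * KLfin (φ s) (pol s) ≤ δ)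
    (H2 : ∀ s, Amax φ s = Amax Qstar s)
    (Sδ : Set X)
    (hSδ : Sδ = {s | ∃ a a', a ≠ a' ∧ |φ s a - φ s a'| ≤ 2 * Real.sqrt (2 * δ / μ s)}) :
    {s | ∃ a, (∀ a', pol s a' ≤ pol s a) ∧ Qstar s a < ⨆ a', Qstar s a'} ⊆ Sδ ∧
    {s | ∃ sν, dist sν s ≤ ε ∧
        ∃ a, (∀ a', pol sν a' ≤ pol sν a) ∧ Qstar s a < ⨆ a', Qstar s a'} ⊆
      {s | ∃ x ∈ Sδ, dist s x ≤ ε} ∪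
      {s | ∃ sν, dist sν s ≤ ε ∧ ¬ Amax Qstar sν ⊆ Amax Qstar s} := by
  subst hSδ
  -- Core fact: outside `S_δ`, any maximizer of `pol s` belongs to `Amax Qstar s`.
  have core : ∀ s : X,
      s ∉ {s | ∃ a a', a ≠ a' ∧ |φ s a - φ s a'| ≤ 2 * Real.sqrt (2 * δ / μ s)} →
      ∀ a : A, (∀ a', pol s a' ≤ pol s a) → a ∈ Amax Qstar s := by
    intro s hs a ha
    simp only [Set.mem_setOf_eq, not_exists, not_and, not_le] at hs
    have hKL : Real.sqrt (2 * KLfin (φ s) (pol s)) ≤ Real.sqrt (2 * δ / μ s) := by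
      apply Real.sqrt_le_sqrt
      have h1 : KLfin (φ s) (pol s) ≤ δ / μ s := by
        rw [le_div_iff₀ (hμ s)]
        linarith [H1 s, mul_comm (μ s) (KLfin (φ s) (pol s))]
      calc 2 * KLfin (φ s) (pol s) ≤ 2 * (δ / μ s) := by linarith
        _ = 2 * δ / μ s := by ring
    have hgap : ∀ b b' : A, b ≠ b' →
        2 * Real.sqrt (2 * δ / μ s) < |φ s b - φ s b'| := fun b b' hbb => hs b b' hbb
    have hmax : ∀ a', φ s a' ≤ φ s a :=
      key_argmax (φ s) (pol s) (hφprob s).1 (hφprob s).2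
        (fun b => (hpolprob s).1 b) (hpolprob s).2 _ hKL hgap a ha
    have : a ∈ Amax φ s := hmax
    rwa [H2 s] at this
  -- If `a ∈ Amax Qstar s` then `Qstar s a` is not below the supremum.
  have noSub : ∀ (s : X) (a : A), a ∈ Amax Qstar s → ¬ Qstar s a < ⨆ a', Qstar s a' := by
    intro s a haQ
    exact not_lt.2 (ciSup_le haQ)
  constructor
  · intro s hsmem
    obtain ⟨a, ha, hlt⟩ := hsmem
    by_contra hnot
    exact noSub s a (core s hnot a ha) hlt
  · intro s hsmem
    obtain ⟨sν, hd, a, ha, hlt⟩ := hsmem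
    by_cases hν : sν ∈ {s | ∃ a a', a ≠ a' ∧ |φ s a - φ s a'| ≤ 2 * Real.sqrt (2 * δ / μ s)}
    · left
      exact ⟨sν, hν, by rwa [dist_comm]⟩
    · have haQ : a ∈ Amax Qstar sν := core sν hν a ha
      by_cases hsub : Amax Qstar sν ⊆ Amax Qstar s
      · exact absurd hlt (noSub s a (hsub haQ))
      · right
        exact ⟨sν, hd, hsub⟩
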